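/- For admissible sequences of words 𝐒₀,…,𝐒_k and μ > 1, define the weights z(𝐒₀,…,𝐒_k) = (e^{−μ|S_k∩S'_{k−1}|}/|(S'_k)₊|)·d_{𝐒_k} ⋯ (e^{−μ|S₁∩S'₀|}/|(S'₁)₊|)·d_{𝐒₁}·(1/|(S'₀)₊|)·v_{𝐒₀}, where d_𝐒 = ||D_𝐒||·e^{μ|S|} and v_𝐒 = ||V⁺_𝐒||·e^{μ|S|}. Set z(k) = sup_α Σ_{admissible 𝐒₀,…,𝐒_k with α∈S'_k} z(𝐒₀,…,𝐒_k) and z_{k,j} = sup_α Σ_{admissible 𝐒₀,…,𝐒_k with α∈S_j} z(𝐒₀,…,𝐒_k). Then for any 0 < j ≤ k, z_{k,j} ≤ z(j−1)·||D||_μ^{k−j+1}, and for j = 0, z_{k,0} ≤ ||D||_μ^k · ||V⁺||_μ. -/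

import Mathlib

open scoped BigOperators
set_option linter.unusedSectionVars false
open Matrix

noncomputable section

namespace QLDPC

open scoped Classical

/-- The four Pauli matrices 1, X, Y, Z. -/
def pauliMat : Fin 4 → Matrix (Fin 2) (Fin 2) ℂ
  | 0 => 1
  | 1 => !![0, 1; 1, 0]
  | 2 => !![0, -Complex.I; Complex.I, 0]
  | 3 => !![1, 0; 0, -1]

variable {Λ E : Type}

/-- Operators on the Hilbert space (ℂ²)^{⊗Λ}. -/
abbrev Op (Λ : Type) [Fintype Λ] [DecidableEq Λ] := Matrix (Λ → Fin 2) (Λ → Fin 2) ℂ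

/-- The operator of a Pauli string `p : Λ → Fin 4`. -/
def pauliOp [Fintype Λ] [DecidableEq Λ] (p : Λ → Fin 4) : Op Λ :=
  fun f g => ∏ x, pauliMat (p x) (f x) (g x)

/-- Qubit support of a Pauli string. -/
def psupp [Fintype Λ] (p : Λ → Fin 4) : Finset Λ :=
  Finset.univ.filter fun x => p x ≠ 0

/-- The operator norm (largest singular value). -/
def opNorm [Fintype Λ] [DecidableEq Λ] (A : Op Λ) : ℝ :=
  ‖Matrix.toEuclideanCLM (𝕜 := ℂ) A‖

/-- Coefficient of the Pauli string `p` in the Pauli-basis expansion of `A`. -/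
def pauliCoeff [Fintype Λ] [DecidableEq Λ] (A : Op Λ) (p : Λ → Fin 4) : ℂ :=
  Matrix.trace (pauliOp p * A) / ((2 : ℂ) ^ Fintype.card Λ)

/-- Qubit support of a general operator, via its Pauli expansion. -/
def opSupp [Fintype Λ] [DecidableEq Λ] (A : Op Λ) : Set Λ :=
  {x | ∃ p : Λ → Fin 4, pauliCoeff A p ≠ 0 ∧ p x ≠ 0}

/-- The data of a family of stabilizer checks: each check is a signed Pauli string. -/
structure Checks (Λ E : Type) where
  str : E → Λ → Fin 4
  sgn : E → Bool

variable [Fintype Λ] [DecidableEq Λ] [Fintype E]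

/-- The operator of check α. -/
def checkOp (K : Checks Λ E) (α : E) : Op Λ :=
  (if K.sgn α then (-1 : ℂ) else 1) • pauliOp (K.str α)

/-- G_α = (1 + C_α)/2. -/
def Gop (K : Checks Λ E) (α : E) : Op Λ := (2⁻¹ : ℂ) • (1 + checkOp K α)

/-- E_α = (1 - C_α)/2. -/
def Eop (K : Checks Λ E) (α : E) : Op Λ := (2⁻¹ : ℂ) • (1 - checkOp K α)

/-- The stabilizer Hamiltonian H₀ = Σ_α E_α. -/
def H0 (K : Checks Λ E) : Op Λ := ∑ α, Eop K α

/-- The stabilizer group 𝒢 generated by the checks (as a submonoid; each check squares to 1). -/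
def stab (K : Checks Λ E) : Submonoid (Op Λ) :=
  Submonoid.closure (Set.range (checkOp K))

/-- All checks pairwise commute (𝒢 abelian). -/
def CommChecks (K : Checks Λ E) : Prop := ∀ α β, Commute (checkOp K α) (checkOp K β)

/-- Check support of a qubit. -/
def suppC (K : Checks Λ E) (x : Λ) : Finset E :=
  Finset.univ.filter fun α => x ∈ psupp (K.str α)

/-- The qubit interaction graph. -/
def qubitGraph (K : Checks Λ E) : SimpleGraph Λ :=
  SimpleGraph.fromRel fun x y => ∃ α, x ∈ psupp (K.str α) ∧ y ∈ psupp (K.str α)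

/-- The check interaction graph. -/
def checkGraph (K : Checks Λ E) : SimpleGraph E :=
  SimpleGraph.fromRel fun α β => (psupp (K.str α) ∩ psupp (K.str β)).Nonempty

/-- `y` lies in the (closed) ball of radius `r` around `x` in the graph `G`. -/
def inBall {V : Type} (G : SimpleGraph V) (x y : V) (r : ℝ) : Prop :=
  G.Reachable x y ∧ (G.dist x y : ℝ) ≤ r

/-- Ball in the qubit graph. -/
def ballQ (K : Checks Λ E) (x : Λ) (r : ℝ) : Finset Λ :=
  Finset.univ.filter fun y => inBall (qubitGraph K) x y r

/-- Ball in the check graph. -/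
def ballC (K : Checks Λ E) (α : E) (r : ℝ) : Finset E :=
  Finset.univ.filter fun β => inBall (checkGraph K) α β r

/-- Ball of radius `r` around a set of checks. -/
def ballCS (K : Checks Λ E) (S : Finset E) (r : ℝ) : Finset E :=
  Finset.univ.filter fun β => ∃ α ∈ S, inBall (checkGraph K) α β r

/-- Growth of balls condition: |B_r| ≤ e^{κ r} on both graphs. -/
def BallGrowth (K : Checks Λ E) (κ : ℝ) : Prop :=
  (∀ (x : Λ) (r : ℝ), ((ballQ K x r).card : ℝ) ≤ Real.exp (κ * r)) ∧
  (∀ (α : E) (r : ℝ), ((ballC K α r).card : ℝ) ≤ Real.exp (κ * r))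

/-- A finite set is connected in a graph if the induced subgraph is connected. -/
def ConnIn {V : Type} (G : SimpleGraph V) (S : Finset V) : Prop :=
  (G.induce (S : Set V)).Connected

/-- Qubit support of a set of checks. -/
def suppSet (K : Checks Λ E) (S : Finset E) : Set Λ :=
  ↑(S.biUnion fun α => psupp (K.str α))

variable [LinearOrder E]

/-- Ordered product of operators over a finite set of check labels. -/
def ordProd (S : Finset E) (f : E → Op Λ) : Op Λ :=
  ((S.sort (· ≤ ·)).map f).prod

/-- The codespace projector P = ∏_α G_α (for commuting checks). -/
def Pmat (K : Checks Λ E) : Op Λ := ordProd Finset.univ (Gop K)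

/-- The code distance: minimal support of a Pauli string p with P p P not proportional to P. -/
def codeDist (K : Checks Λ E) : ℕ :=
  sInf ((fun p => (psupp p).card) ''
    {p : Λ → Fin 4 | ¬∃ cc : ℂ, Pmat K * pauliOp p * Pmat K = cc • Pmat K})

/-- TQO-I: Pauli strings of weight below the code distance commuting with 𝒢 belong to 𝒢. -/
def TQO1 (K : Checks Λ E) : Prop :=
  ∀ p : Λ → Fin 4, (psupp p).card < codeDist K →
    (∀ g ∈ stab K, Commute (pauliOp p) g) → pauliOp p ∈ stab K

/-- TQO-II: group elements locally supported on a small connected check set S are generated by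
checks within distance ℓ|S| of S. -/
def TQO2 (K : Checks Λ E) (ℓ dtil : ℝ) : Prop :=
  ∀ S : Finset E, ConnIn (checkGraph K) S → (S.card : ℝ) < dtil →
    ∀ g ∈ stab K, opSupp (g : Op Λ) ⊆ suppSet K S →
      (g : Op Λ) ∈ Submonoid.closure (checkOp K '' {α | ∃ β ∈ S, inBall (checkGraph K) β α (ℓ * S.card)})

/-! ### Words and operator-collections -/

/-- A word: a quadruple of pairwise disjoint subsets of the checks,
labelled (+, -, excited, ground). -/
structure Word (E : Type) where
  p : Finset E
  m : Finset E
  e : Finset E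
  g : Finset E
  hpm : Disjoint p m
  hpe : Disjoint p e
  hpg : Disjoint p g
  hme : Disjoint m e
  hmg : Disjoint m g
  heg : Disjoint e g

/-- The underlying set of the word. -/
def Word.S [DecidableEq E] (w : Word E) : Finset E := w.p ∪ w.m ∪ w.e ∪ w.g

instance : Fintype (Word E) := by
  classical
  exact Fintype.ofInjective (fun w : Word E => (w.p, w.m, w.e, w.g))
    (by
      rintro ⟨a1, a2, a3, a4, _, _, _, _, _, _⟩ ⟨b1, b2, b3, b4, _, _, _, _, _, _⟩ h
      simp only [Prod.mk.injEq] at h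
      obtain ⟨h1, h2, h3, h4⟩ := h
      subst h1; subst h2; subst h3; subst h4; rfl)

/-- A word is a ghost if all components except the ground one are empty. -/
def IsGhost (w : Word E) : Prop := w.p = ∅ ∧ w.m = ∅ ∧ w.e = ∅

/-- The empty word. -/
def emptyWord (E : Type) : Word E :=
  ⟨∅, ∅, ∅, ∅, by simp, by simp, by simp, by simp, by simp, by simp⟩

/-- Left projector assignment of a word. -/
def leftP (K : Checks Λ E) (w : Word E) (α : E) : Op Λ :=
  if α ∈ w.m ∪ w.g then Gop K α else Eop K α

/-- Right projector assignment of a word. -/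
def rightP (K : Checks Λ E) (w : Word E) (α : E) : Op Λ :=
  if α ∈ w.p ∪ w.g then Gop K α else Eop K α

/-- The class 𝒳_𝐒 of operators compatible with the word 𝐒. -/
def memClass (K : Checks Λ E) (w : Word E) (X : Op Λ) : Prop :=
  ∃ Y : Op Λ,
    (∀ α : E, (opSupp Y ∩ (psupp (K.str α) : Set Λ)).Nonempty → α ∈ w.S) ∧
    X = ordProd w.S (leftP K w) * Y * ordProd w.S (rightP K w)

/-- An operator-collection: a family (O_𝐒)_𝐒 with O_𝐒 ∈ 𝒳_𝐒. -/
def IsColl (K : Checks Λ E) (O : Word E → Op Λ) : Prop :=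
  ∀ w, memClass K w (O w)

/-- The intensive word norm ‖O‖_μ of an operator-collection. -/
def wordNorm (μ : ℝ) (O : Word E → Op Λ) : ℝ :=
  ⨆ α : E, ∑ w : Word E, (if α ∈ w.S then opNorm (O w) * Real.exp (μ * w.S.card) else 0)

/-! ### The multiplication table of words -/

/-- Labels of a check in a word: none, ground, excited, raising, lowering. -/
inductive Lbl | N | G | E | P | M
deriving DecidableEq

/-- The multiplication table of labels; `none` encodes that the product vanishes. -/
def lblMul : Lbl → Lbl → Option Lbl
  | .N, x => some x
  | .G, .N => some .G
  | .G, .G => some .G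
  | .G, .E => none
  | .G, .P => none
  | .G, .M => some .M
  | .E, .N => some .E
  | .E, .G => none
  | .E, .E => some .E
  | .E, .P => some .P
  | .E, .M => none
  | .P, .N => some .P
  | .P, .G => some .P
  | .P, .E => none
  | .P, .P => none
  | .P, .M => some .E
  | .M, .N => some .M
  | .M, .G => none
  | .M, .E => some .M
  | .M, .P => some .G
  | .M, .M => none

/-- The label of a check in a word. -/
def Word.lbl [DecidableEq E] (w : Word E) (α : E) : Lbl :=
  if α ∈ w.p then .P else if α ∈ w.m then .M else if α ∈ w.e then .E
  else if α ∈ w.g then .G else .N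

/-- The product of two words is defined (the corresponding operator product does not vanish
identically by the multiplication table). -/
def MulDef (w' w : Word E) : Prop :=
  ∀ α : E, lblMul (w'.lbl α) (w.lbl α) ≠ none

private lemma disj_aux {f : E → Option Lbl} {a b : Lbl} (hab : a ≠ b) :
    Disjoint (Finset.univ.filter fun α => f α = some a)
      (Finset.univ.filter fun α => f α = some b) := by
  rw [Finset.disjoint_left]
  intro x hx hy
  simp only [Finset.mem_filter] at hx hy
  exact hab (Option.some.inj (hx.2.symm.trans hy.2))

/-- The product word 𝐒'𝐒 (meaningful when `MulDef w' w`). -/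
def wmul (w' w : Word E) : Word E where
  p := Finset.univ.filter fun α => lblMul (w'.lbl α) (w.lbl α) = some .P
  m := Finset.univ.filter fun α => lblMul (w'.lbl α) (w.lbl α) = some .M
  e := Finset.univ.filter fun α => lblMul (w'.lbl α) (w.lbl α) = some .E
  g := Finset.univ.filter fun α => lblMul (w'.lbl α) (w.lbl α) = some .G
  hpm := disj_aux (by decide)
  hpe := disj_aux (by decide)
  hpg := disj_aux (by decide)
  hme := disj_aux (by decide)
  hmg := disj_aux (by decide)
  heg := disj_aux (by decide)

/-- The commutator of two operator-collections. -/
def collComm (O O' : Word E → Op Λ) : Word E → Op Λ := fun w =>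
  ∑ w1 : Word E, ∑ w2 : Word E,
    if MulDef w1 w2 ∧ wmul w1 w2 = w ∧ (w1.S ∩ w2.S).Nonempty
    then O w1 * O' w2 - O' w1 * O w2 else 0

/-- Iterated adjoint action ad_{B_k}⋯ad_{B_1}(B_0) of operator-collections. -/
def chainAd (B : ℕ → Word E → Op Λ) : ℕ → Word E → Op Λ
  | 0 => B 0
  | k + 1 => collComm (B (k + 1)) (chainAd B k)

/-- exp(i ad_A)(B) for operator-collections, defined componentwise. -/
def expAd (A B : Word E → Op Λ) : Word E → Op Λ := fun w =>
  ∑' k : ℕ, ((Complex.I ^ k / (k.factorial : ℂ)) • ((fun C => collComm A C)^[k] B) w)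

/-! ### Sequences of words -/

/-- The running products 𝐒'_i of a sequence of words. -/
def sprime (σ : ℕ → Word E) : ℕ → Word E
  | 0 => σ 0
  | i + 1 => wmul (σ (i + 1)) (sprime σ i)

/-- The running products with ghost words skipped. -/
def sprimeG (σ : ℕ → Word E) : ℕ → Word E
  | 0 => σ 0
  | i + 1 => if IsGhost (σ (i + 1)) then sprimeG σ i else wmul (σ (i + 1)) (sprimeG σ i)

/-- Extend a finite sequence of words by the empty word. -/
def extend {k : ℕ} (σ : Fin (k + 1) → Word E) : ℕ → Word E :=
  fun i => if h : i < k + 1 then σ ⟨i, h⟩ else emptyWord E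

/-! ### Pauli norms -/

/-- Size of a minimal connected set of qubits containing the support of `p`. -/
def mSize (K : Checks Λ E) (p : Λ → Fin 4) : ℕ :=
  sInf {n | ∃ T : Finset Λ, ConnIn (qubitGraph K) T ∧ psupp p ⊆ T ∧ T.card = n}

/-- The intensive Pauli norm of an operator given by Pauli coefficients `c`. -/
def pauliNormC (K : Checks Λ E) (μ : ℝ) (c : (Λ → Fin 4) → ℂ) : ℝ :=
  ⨆ x : Λ, ∑ p : Λ → Fin 4, (if p x ≠ 0 then ‖c p‖ * Real.exp (μ * (mSize K p : ℝ)) else 0)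

/-- The intensive Pauli norm of an operator. -/
def pauliNormOp (K : Checks Λ E) (μ : ℝ) (A : Op Λ) : ℝ :=
  pauliNormC K μ (pauliCoeff A)

/-- Diameter of the qubit graph. -/
def diam (K : Checks Λ E) : ℕ :=
  Finset.univ.sup fun pr : Λ × Λ => (qubitGraph K).dist pr.1 pr.2

/-- The spectral projector of a Hermitian matrix onto the eigenvalues in [-δ, δ]. -/
def spectralProjLE {n : Type} [Fintype n] [DecidableEq n] {A : Matrix n n ℂ}
    (hA : A.IsHermitian) (δ : ℝ) : Matrix n n ℂ :=
  (hA.eigenvectorUnitary : Matrix n n ℂ) *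
    Matrix.diagonal (fun i => if |hA.eigenvalues i| ≤ δ then (1 : ℂ) else 0) *
    star (hA.eigenvectorUnitary : Matrix n n ℂ)


section Stmt9

variable {Λ E : Type} [Fintype Λ] [DecidableEq Λ] [Fintype E] [LinearOrder E]

/-- Admissibility of a sequence of words `𝐒₀,…,𝐒_k`: all running products `𝐒'_i` are defined,
no `𝐒_i` is a ghost, each `𝐒_i` (for `i ≥ 1`) has `(S_i)_e ∪ (S_i)₋ ≠ ∅`, and each `𝐒'_i`
has `(S'_i)_e = (S'_i)₋ = ∅`. -/
def Adm (σ : ℕ → Word E) (k : ℕ) : Prop :=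
  (∀ i ≤ k, ¬IsGhost (σ i)) ∧
  (∀ i : ℕ, i + 1 ≤ k → MulDef (σ (i + 1)) (sprime σ i)) ∧
  (∀ i : ℕ, 1 ≤ i → i ≤ k → ((σ i).e ∪ (σ i).m).Nonempty) ∧
  (∀ i ≤ k, (sprime σ i).e = ∅ ∧ (sprime σ i).m = ∅)

/-- The weight
`z(𝐒₀,…,𝐒_k) = (e^{−μ|S_k∩S'_{k−1}|}/|(S'_k)₊|) d_{𝐒_k} ⋯ (e^{−μ|S₁∩S'₀|}/|(S'₁)₊|) d_{𝐒₁}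
 (1/|(S'₀)₊|) v_{𝐒₀}` with `d_𝐒 = ‖D_𝐒‖e^{μ|S|}` and `v_𝐒 = ‖V⁺_𝐒‖e^{μ|S|}`. -/
def zw9 (D V : Word E → Op Λ) (μ : ℝ) (σ : ℕ → Word E) (k : ℕ) : ℝ :=
  (1 / (((sprime σ 0).p.card : ℝ))) * (opNorm (V (σ 0)) * Real.exp (μ * ((σ 0).S.card : ℝ))) *
    ∏ i ∈ Finset.range k,
      (Real.exp (-μ * ((((σ (i + 1)).S ∩ (sprime σ i).S).card : ℝ))) /
          (((sprime σ (i + 1)).p.card : ℝ)) *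
        (opNorm (D (σ (i + 1))) * Real.exp (μ * (((σ (i + 1)).S.card : ℝ)))))

/-- `z(k)`: sup over `α` of the sum of weights over admissible sequences with `α ∈ S'_k`. -/
def z9 (D V : Word E → Op Λ) (μ : ℝ) (k : ℕ) : ℝ :=
  ⨆ α : E, ∑ σ : Fin (k + 1) → Word E,
    (if Adm (extend σ) k ∧ α ∈ (sprime (extend σ) k).S then zw9 D V μ (extend σ) k else 0)

/-- `z_{k,j}`: same as `z(k)` but anchored by the condition `α ∈ S_j`. -/
def z9kj (D V : Word E → Op Λ) (μ : ℝ) (k j : ℕ) : ℝ :=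
  ⨆ α : E, ∑ σ : Fin (k + 1) → Word E,
    (if Adm (extend σ) k ∧ α ∈ (extend σ j).S then zw9 D V μ (extend σ) k else 0)

/-! ### Auxiliary lemmas for `generator_combinatorial_bound` -/

private lemma gcb_opNorm_nonneg (A : Op Λ) : 0 ≤ opNorm A := norm_nonneg _

private lemma gcb_dnn (O : Word E → Op Λ) (μ : ℝ) (w : Word E) :
    0 ≤ opNorm (O w) * Real.exp (μ * (w.S.card : ℝ)) :=
  mul_nonneg (gcb_opNorm_nonneg _) (Real.exp_pos _).le

private lemma gcb_if_nonneg {c : Prop} [Decidable c] {x : ℝ} (hx : 0 ≤ x) :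
    0 ≤ if c then x else 0 := by
  split_ifs; exacts [hx, le_rfl]

private lemma gcb_zw9_nonneg (D V : Word E → Op Λ) (μ : ℝ) (σ : ℕ → Word E) (k : ℕ) :
    0 ≤ zw9 D V μ σ k := by
  unfold zw9
  refine mul_nonneg (mul_nonneg ?_ (gcb_dnn V μ _)) (Finset.prod_nonneg fun i _ => ?_)
  · positivity
  · exact mul_nonneg (div_nonneg (Real.exp_pos _).le (Nat.cast_nonneg _)) (gcb_dnn D μ _)

private lemma gcb_exp_le_one {μ x : ℝ} (hμ : 0 < μ) (hx : 0 ≤ x) :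
    Real.exp (-μ * x) ≤ 1 :=
  Real.exp_le_one_iff.mpr (by nlinarith)

private lemma gcb_div_cancel_le {ex c d : ℝ} (hd : 0 ≤ d) (hex : ex ≤ 1) (hc : 0 ≤ c) :
    ex / c * d * c ≤ d := by
  rcases eq_or_ne c 0 with rfl | hc0
  · simpa using hd
  · rw [div_mul_eq_mul_div, div_mul_cancel₀ _ hc0]
    exact mul_le_of_le_one_left hd hex

private lemma gcb_mem_S_of_mem_p {w : Word E} {β : E} (h : β ∈ w.p) : β ∈ w.S := by
  simp only [Word.S, Finset.mem_union]; tauto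

private lemma gcb_mem_S_of_mem_em {w : Word E} {β : E} (h : β ∈ w.e ∪ w.m) : β ∈ w.S := by
  rw [Finset.mem_union] at h
  simp only [Word.S, Finset.mem_union]; tauto

private lemma gcb_sprime_congr (σ1 σ2 : ℕ → Word E) :
    ∀ n, (∀ i ≤ n, σ1 i = σ2 i) → sprime σ1 n = sprime σ2 n
  | 0, h => by simp only [sprime]; exact h 0 le_rfl
  | n+1, h => by
      simp only [sprime]
      rw [h (n+1) le_rfl,
        gcb_sprime_congr σ1 σ2 n (fun i hi => h i (hi.trans (Nat.le_succ n)))]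

private lemma gcb_extend_snoc_lt {k : ℕ} (τ : Fin (k+1) → Word E) (w : Word E) {i : ℕ}
    (hi : i < k+1) : extend (Fin.snoc τ w) i = extend τ i := by
  unfold extend
  rw [dif_pos (Nat.lt_succ_of_lt hi), dif_pos hi]
  exact Fin.snoc_castSucc (α := fun _ => Word E) (p := τ) (x := w) (i := ⟨i, hi⟩)

private lemma gcb_extend_snoc_last {k : ℕ} (τ : Fin (k+1) → Word E) (w : Word E) :
    extend (Fin.snoc τ w) (k+1) = w := by
  unfold extend
  rw [dif_pos (Nat.lt_succ_self _)]
  exact Fin.snoc_last (α := fun _ => Word E) (p := τ) (x := w)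

private lemma gcb_sprime_snoc {k : ℕ} (τ : Fin (k+1) → Word E) (w : Word E) {i : ℕ}
    (hi : i ≤ k) : sprime (extend (Fin.snoc τ w)) i = sprime (extend τ) i :=
  gcb_sprime_congr _ _ i fun j hj => gcb_extend_snoc_lt τ w (Nat.lt_succ_of_le (hj.trans hi))

private lemma gcb_sprime_snoc_succ {k : ℕ} (τ : Fin (k+1) → Word E) (w : Word E) :
    sprime (extend (Fin.snoc τ w)) (k+1) = wmul w (sprime (extend τ) k) := by
  rw [show sprime (extend (Fin.snoc τ w)) (k+1)
      = wmul (extend (Fin.snoc τ w) (k+1)) (sprime (extend (Fin.snoc τ w)) k) from rfl,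
    gcb_extend_snoc_last, gcb_sprime_snoc τ w le_rfl]

private lemma gcb_Adm_snoc {k : ℕ} {τ : Fin (k+1) → Word E} {w : Word E}
    (h : Adm (extend (Fin.snoc τ w)) (k+1)) :
    Adm (extend τ) k ∧ (w.e ∪ w.m).Nonempty ∧ MulDef w (sprime (extend τ) k) ∧
      (wmul w (sprime (extend τ) k)).e = ∅ ∧ (wmul w (sprime (extend τ) k)).m = ∅ := by
  obtain ⟨h1, h2, h3, h4⟩ := h
  refine ⟨⟨?_, ?_, ?_, ?_⟩, ?_, ?_, ?_, ?_⟩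
  · intro i hi
    rw [← gcb_extend_snoc_lt τ w (Nat.lt_succ_of_le hi)]
    exact h1 i (hi.trans (Nat.le_succ _))
  · intro i hi
    have := h2 i (hi.trans (Nat.le_succ _))
    rwa [gcb_extend_snoc_lt τ w (Nat.lt_succ_of_le hi),
      gcb_sprime_snoc τ w (Nat.le_of_succ_le hi)] at this
  · intro i h1i hik
    have := h3 i h1i (hik.trans (Nat.le_succ _))
    rwa [gcb_extend_snoc_lt τ w (Nat.lt_succ_of_le hik)] at this
  · intro i hi
    have := h4 i (hi.trans (Nat.le_succ _))
    rwa [gcb_sprime_snoc τ w hi] at this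
  · have := h3 (k+1) (Nat.succ_le_succ (Nat.zero_le _)) le_rfl
    rwa [gcb_extend_snoc_last] at this
  · have := h2 k le_rfl
    rwa [gcb_extend_snoc_last, gcb_sprime_snoc τ w le_rfl] at this
  · have := (h4 (k+1) le_rfl).1
    rwa [gcb_sprime_snoc_succ] at this
  · have := (h4 (k+1) le_rfl).2
    rwa [gcb_sprime_snoc_succ] at this

private lemma gcb_mem_p_of_lbl {s : Word E} {β : E} (h : s.lbl β = Lbl.P) : β ∈ s.p := by
  unfold Word.lbl at h
  split_ifs at h <;> first | assumption | exact absurd h (by decide)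

private lemma gcb_lbl_of_mem_e {w : Word E} {β : E} (h : β ∈ w.e) : w.lbl β = Lbl.E := by
  unfold Word.lbl
  rw [if_neg (fun hp => (Finset.disjoint_left.mp w.hpe) hp h),
    if_neg (fun hm => (Finset.disjoint_left.mp w.hme) hm h), if_pos h]

private lemma gcb_lbl_of_mem_m {w : Word E} {β : E} (h : β ∈ w.m) : w.lbl β = Lbl.M := by
  unfold Word.lbl
  rw [if_neg (fun hp => (Finset.disjoint_left.mp w.hpm) hp h), if_pos h]

private lemma gcb_anchor {w s : Word E} (hmd : MulDef w s)
    (he : (wmul w s).e = ∅) (hm : (wmul w s).m = ∅) {β : E} (hβ : β ∈ w.e ∪ w.m) :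
    β ∈ s.p := by
  have hne : lblMul (w.lbl β) (s.lbl β) ≠ some Lbl.E := by
    intro hc
    have : β ∈ (wmul w s).e := by simp [wmul, hc]
    simp [he] at this
  have hnm : lblMul (w.lbl β) (s.lbl β) ≠ some Lbl.M := by
    intro hc
    have : β ∈ (wmul w s).m := by simp [wmul, hc]
    simp [hm] at this
  have hnn : lblMul (w.lbl β) (s.lbl β) ≠ none := hmd β
  apply gcb_mem_p_of_lbl
  rcases Finset.mem_union.mp hβ with h | h
  · have hw : w.lbl β = Lbl.E := gcb_lbl_of_mem_e h
    rw [hw] at hne hnm hnn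
    cases hsl : s.lbl β <;> rw [hsl] at hne hnm hnn <;> simp_all [lblMul]
  · have hw : w.lbl β = Lbl.M := gcb_lbl_of_mem_m h
    rw [hw] at hne hnm hnn
    cases hsl : s.lbl β <;> rw [hsl] at hne hnm hnn <;> simp_all [lblMul]

private lemma gcb_sum_snoc {M : Type} [AddCommMonoid M] {k : ℕ}
    (f : (Fin (k+2) → Word E) → M) :
    ∑ σ : Fin (k+2) → Word E, f σ
      = ∑ τ : Fin (k+1) → Word E, ∑ w : Word E, f (Fin.snoc τ w) := by
  rw [← (Fin.snocEquiv (fun _ : Fin (k+2) => Word E)).sum_comp f, Fintype.sum_prod_type,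
    Finset.sum_comm]
  rfl

set_option maxHeartbeats 1600000 in
private lemma gcb_zw9_snoc {k : ℕ} (D V : Word E → Op Λ) (μ : ℝ)
    (τ : Fin (k+1) → Word E) (w : Word E) :
    zw9 D V μ (extend (Fin.snoc τ w)) (k+1)
      = zw9 D V μ (extend τ) k *
        (Real.exp (-μ * (((w.S ∩ (sprime (extend τ) k).S).card : ℝ))) /
            (((wmul w (sprime (extend τ) k)).p.card : ℝ)) *
          (opNorm (D w) * Real.exp (μ * ((w.S.card : ℝ))))) := by
  have h0 : extend (Fin.snoc τ w) 0 = extend τ 0 := gcb_extend_snoc_lt τ w (Nat.succ_pos _)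
  have hs0 : sprime (extend (Fin.snoc τ w)) 0 = sprime (extend τ) 0 :=
    gcb_sprime_snoc τ w (Nat.zero_le _)
  have hlast : extend (Fin.snoc τ w) (k+1) = w := gcb_extend_snoc_last τ w
  have hsk : sprime (extend (Fin.snoc τ w)) k = sprime (extend τ) k :=
    gcb_sprime_snoc τ w le_rfl
  have hP : (∏ i ∈ Finset.range k,
        (Real.exp (-μ * ((((extend (Fin.snoc τ w)) (i + 1)).S ∩
              (sprime (extend (Fin.snoc τ w)) i).S).card : ℝ)) /
            (((sprime (extend (Fin.snoc τ w)) (i + 1)).p.card : ℝ)) *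
          (opNorm (D ((extend (Fin.snoc τ w)) (i + 1))) *
            Real.exp (μ * ((((extend (Fin.snoc τ w)) (i + 1)).S.card : ℝ))))))
      = ∏ i ∈ Finset.range k,
        (Real.exp (-μ * ((((extend τ) (i + 1)).S ∩ (sprime (extend τ) i).S).card : ℝ)) /
            (((sprime (extend τ) (i + 1)).p.card : ℝ)) *
          (opNorm (D ((extend τ) (i + 1))) *
            Real.exp (μ * ((((extend τ) (i + 1)).S.card : ℝ))))) :=
    Finset.prod_congr rfl fun i hi => by
      have hik := Finset.mem_range.mp hi
      rw [gcb_extend_snoc_lt τ w (Nat.succ_lt_succ hik),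
        gcb_sprime_snoc τ w hik, gcb_sprime_snoc τ w (le_of_lt hik)]
  unfold zw9
  rw [Finset.prod_range_succ, hP, gcb_sprime_snoc_succ, h0, hs0, hlast, hsk]
  ring

private lemma gcb_wordNorm_nonneg (μ : ℝ) (O : Word E → Op Λ) : 0 ≤ wordNorm μ O :=
  Real.iSup_nonneg fun _ => Finset.sum_nonneg fun w _ => gcb_if_nonneg (gcb_dnn O μ w)

private lemma gcb_sum_le_wordNorm (O : Word E → Op Λ) (μ : ℝ) (β : E) :
    ∑ w : Word E, (if β ∈ w.S then opNorm (O w) * Real.exp (μ * (w.S.card : ℝ)) else 0)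
      ≤ wordNorm μ O := by
  unfold wordNorm
  apply le_ciSup (Set.Finite.bddAbove (Set.finite_range _)) β

private lemma gcb_anchored_sum_le (O : Word E → Op Λ) (μ : ℝ) (P : Finset E) :
    ∑ w : Word E,
        (if (w.S ∩ P).Nonempty then opNorm (O w) * Real.exp (μ * (w.S.card : ℝ)) else 0)
      ≤ (P.card : ℝ) * wordNorm μ O := by
  have h1 : ∀ w : Word E,
      (if (w.S ∩ P).Nonempty then opNorm (O w) * Real.exp (μ * (w.S.card : ℝ)) else 0)
        ≤ ∑ β ∈ P, (if β ∈ w.S then opNorm (O w) * Real.exp (μ * (w.S.card : ℝ)) else 0) := by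
    intro w
    split_ifs with h
    · obtain ⟨β, hβ⟩ := h
      rw [Finset.mem_inter] at hβ
      have := Finset.single_le_sum
        (f := fun β : E => if β ∈ w.S then opNorm (O w) * Real.exp (μ * (w.S.card : ℝ)) else 0)
        (fun b _ => gcb_if_nonneg (gcb_dnn O μ w)) hβ.2
      simpa [if_pos hβ.1] using this
    · exact Finset.sum_nonneg fun b _ => gcb_if_nonneg (gcb_dnn O μ w)
  calc ∑ w : Word E,
        (if (w.S ∩ P).Nonempty then opNorm (O w) * Real.exp (μ * (w.S.card : ℝ)) else 0)
      ≤ ∑ w : Word E, ∑ β ∈ P,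
          (if β ∈ w.S then opNorm (O w) * Real.exp (μ * (w.S.card : ℝ)) else 0) :=
        Finset.sum_le_sum fun w _ => h1 w
    _ = ∑ β ∈ P, ∑ w : Word E,
          (if β ∈ w.S then opNorm (O w) * Real.exp (μ * (w.S.card : ℝ)) else 0) :=
        Finset.sum_comm
    _ ≤ ∑ _β ∈ P, wordNorm μ O := Finset.sum_le_sum fun β _ => gcb_sum_le_wordNorm O μ β
    _ = (P.card : ℝ) * wordNorm μ O := by rw [Finset.sum_const, nsmul_eq_mul]

private def zt9 (D V : Word E → Op Λ) (μ : ℝ) (k j : ℕ) : ℝ :=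
  ⨆ α : E, ∑ σ : Fin (k + 1) → Word E,
    (if Adm (extend σ) k ∧ α ∈ (extend σ j).S then
      zw9 D V μ (extend σ) k * (((sprime (extend σ) k).p.card : ℝ)) else 0)

private lemma gcb_zt9_nonneg (D V : Word E → Op Λ) (μ : ℝ) (k j : ℕ) :
    0 ≤ zt9 D V μ k j :=
  Real.iSup_nonneg fun _ => Finset.sum_nonneg fun σ _ =>
    gcb_if_nonneg (mul_nonneg (gcb_zw9_nonneg D V μ _ _) (Nat.cast_nonneg _))

private lemma gcb_z9_nonneg (D V : Word E → Op Λ) (μ : ℝ) (k : ℕ) :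
    0 ≤ z9 D V μ k :=
  Real.iSup_nonneg fun _ => Finset.sum_nonneg fun σ _ =>
    gcb_if_nonneg (gcb_zw9_nonneg D V μ _ _)

private lemma gcb_zw9_le_mul_card (D V : Word E → Op Λ) (μ : ℝ) (σ : ℕ → Word E) (k : ℕ) :
    zw9 D V μ σ k ≤ zw9 D V μ σ k * (((sprime σ k).p.card : ℝ)) := by
  rcases Nat.eq_zero_or_pos (sprime σ k).p.card with h | h
  · have hz : zw9 D V μ σ k = 0 := by
      cases k with
      | zero => simp [zw9, h]
      | succ n =>
        unfold zw9
        rw [Finset.prod_eq_zero (Finset.self_mem_range_succ n) (by simp [h]), mul_zero]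
    rw [hz, h]; simp
  · calc zw9 D V μ σ k = zw9 D V μ σ k * 1 := (mul_one _).symm
      _ ≤ zw9 D V μ σ k * (((sprime σ k).p.card : ℝ)) :=
        mul_le_mul_of_nonneg_left (by exact_mod_cast h) (gcb_zw9_nonneg D V μ σ k)

private lemma gcb_z9kj_le_zt9 (D V : Word E → Op Λ) (μ : ℝ) (k j : ℕ) :
    z9kj D V μ k j ≤ zt9 D V μ k j := by
  have hnn := gcb_zt9_nonneg D V μ k j
  unfold z9kj zt9
  unfold zt9 at hnn
  refine Real.iSup_le (fun α => ?_) hnn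
  refine le_trans (Finset.sum_le_sum
      (g := fun σ : Fin (k+1) → Word E =>
        if Adm (extend σ) k ∧ α ∈ (extend σ j).S then
          zw9 D V μ (extend σ) k * (((sprime (extend σ) k).p.card : ℝ)) else 0)
      fun σ _ => ?_) ?_
  · split_ifs with h
    · exact gcb_zw9_le_mul_card D V μ _ k
    · exact le_rfl
  · apply le_ciSup (Set.Finite.bddAbove (Set.finite_range _)) α

private lemma gcb_zt9_step (D V : Word E → Op Λ) {μ : ℝ} (hμ : 0 < μ) {k j : ℕ}
    (hj : j ≤ k) : zt9 D V μ (k+1) j ≤ zt9 D V μ k j * wordNorm μ D := by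
  have hzt := gcb_zt9_nonneg D V μ k j
  have hDn := gcb_wordNorm_nonneg μ D
  have key : ∀ (α : E) (τ : Fin (k+1) → Word E),
      (∑ w : Word E,
        if Adm (extend (Fin.snoc τ w)) (k+1) ∧ α ∈ (extend (Fin.snoc τ w) j).S then
          zw9 D V μ (extend (Fin.snoc τ w)) (k+1) *
            (((sprime (extend (Fin.snoc τ w)) (k+1)).p.card : ℝ)) else 0)
      ≤ (if Adm (extend τ) k ∧ α ∈ (extend τ j).S then
          zw9 D V μ (extend τ) k * (((sprime (extend τ) k).p.card : ℝ)) else 0) *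
        wordNorm μ D := by
    intro α τ
    by_cases hc : Adm (extend τ) k ∧ α ∈ (extend τ j).S
    · rw [if_pos hc]
      have hterm : ∀ w : Word E,
          (if Adm (extend (Fin.snoc τ w)) (k+1) ∧ α ∈ (extend (Fin.snoc τ w) j).S then
            zw9 D V μ (extend (Fin.snoc τ w)) (k+1) *
              (((sprime (extend (Fin.snoc τ w)) (k+1)).p.card : ℝ)) else 0)
          ≤ zw9 D V μ (extend τ) k *
            (if (w.S ∩ (sprime (extend τ) k).p).Nonempty then
              opNorm (D w) * Real.exp (μ * (w.S.card : ℝ)) else 0) := by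
        intro w
        split_ifs with h h2 h2
        · rw [gcb_zw9_snoc, gcb_sprime_snoc_succ, mul_assoc]
          refine mul_le_mul_of_nonneg_left ?_ (gcb_zw9_nonneg D V μ _ k)
          exact gcb_div_cancel_le (gcb_dnn D μ w)
            (gcb_exp_le_one hμ (Nat.cast_nonneg _)) (Nat.cast_nonneg _)
        · exfalso
          obtain ⟨hAτ, hne', hmd, hee, hmm⟩ := gcb_Adm_snoc h.1
          obtain ⟨β, hβ⟩ := hne'
          exact h2 ⟨β, Finset.mem_inter.mpr
            ⟨gcb_mem_S_of_mem_em hβ, gcb_anchor hmd hee hmm hβ⟩⟩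
        · exact mul_nonneg (gcb_zw9_nonneg D V μ _ k) (gcb_dnn D μ w)
        · exact le_of_eq (mul_zero _).symm
      refine le_trans (Finset.sum_le_sum fun w (_ : w ∈ Finset.univ) => hterm w) ?_
      rw [← Finset.mul_sum, mul_assoc]
      exact mul_le_mul_of_nonneg_left (gcb_anchored_sum_le D μ _) (gcb_zw9_nonneg D V μ _ k)
    · rw [if_neg hc, zero_mul]
      rw [Finset.sum_eq_zero fun w _ => ?_]
      rw [if_neg]
      rintro ⟨hA, hα⟩
      exact hc ⟨(gcb_Adm_snoc hA).1,
        by rwa [gcb_extend_snoc_lt τ w (Nat.lt_succ_of_le hj)] at hα⟩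
  have hnn2 : 0 ≤ zt9 D V μ k j * wordNorm μ D := mul_nonneg hzt hDn
  unfold zt9 at hnn2 ⊢
  refine Real.iSup_le (fun α => ?_) hnn2
  rw [gcb_sum_snoc]
  refine le_trans (Finset.sum_le_sum fun τ (_ : τ ∈ Finset.univ) => key α τ) ?_
  rw [← Finset.sum_mul]
  refine mul_le_mul_of_nonneg_right ?_ hDn
  apply le_ciSup (Set.Finite.bddAbove (Set.finite_range _)) α

private lemma gcb_zt9_last (D V : Word E → Op Λ) {μ : ℝ} (hμ : 0 < μ) (m : ℕ) :
    zt9 D V μ (m+1) (m+1) ≤ z9 D V μ m * wordNorm μ D := by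
  have hz9 := gcb_z9_nonneg D V μ m
  have key : ∀ (α : E) (w : Word E),
      (∑ τ : Fin (m+1) → Word E,
        if Adm (extend (Fin.snoc τ w)) (m+1) ∧ α ∈ (extend (Fin.snoc τ w) (m+1)).S then
          zw9 D V μ (extend (Fin.snoc τ w)) (m+1) *
            (((sprime (extend (Fin.snoc τ w)) (m+1)).p.card : ℝ)) else 0)
      ≤ (if α ∈ w.S then opNorm (D w) * Real.exp (μ * (w.S.card : ℝ)) else 0) *
        z9 D V μ m := by
    intro α w
    by_cases hw : α ∈ w.S ∧ (w.e ∪ w.m).Nonempty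
    · obtain ⟨hα, hne⟩ := hw
      obtain ⟨β, hβ⟩ := hne
      have hterm : ∀ τ : Fin (m+1) → Word E,
          (if Adm (extend (Fin.snoc τ w)) (m+1) ∧ α ∈ (extend (Fin.snoc τ w) (m+1)).S then
            zw9 D V μ (extend (Fin.snoc τ w)) (m+1) *
              (((sprime (extend (Fin.snoc τ w)) (m+1)).p.card : ℝ)) else 0)
          ≤ (opNorm (D w) * Real.exp (μ * (w.S.card : ℝ))) *
            (if Adm (extend τ) m ∧ β ∈ (sprime (extend τ) m).S then
              zw9 D V μ (extend τ) m else 0) := by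
        intro τ
        split_ifs with h h2 h2
        · rw [gcb_zw9_snoc, gcb_sprime_snoc_succ, mul_assoc]
          refine le_trans (mul_le_mul_of_nonneg_left ?_ (gcb_zw9_nonneg D V μ _ m))
            (le_of_eq (mul_comm _ _))
          exact gcb_div_cancel_le (gcb_dnn D μ w)
            (gcb_exp_le_one hμ (Nat.cast_nonneg _)) (Nat.cast_nonneg _)
        · exfalso
          obtain ⟨hAτ, hne', hmd, hee, hmm⟩ := gcb_Adm_snoc h.1
          exact h2 ⟨hAτ, gcb_mem_S_of_mem_p (gcb_anchor hmd hee hmm hβ)⟩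
        · exact mul_nonneg (gcb_dnn D μ w) (gcb_zw9_nonneg D V μ _ m)
        · exact le_of_eq (mul_zero _).symm
      refine le_trans (Finset.sum_le_sum fun τ (_ : τ ∈ Finset.univ) => hterm τ) ?_
      rw [← Finset.mul_sum, if_pos hα]
      refine mul_le_mul_of_nonneg_left ?_ (gcb_dnn D μ w)
      unfold z9
      apply le_ciSup (Set.Finite.bddAbove (Set.finite_range _)) β
    · rw [Finset.sum_eq_zero fun τ _ => ?_]
      · exact mul_nonneg (gcb_if_nonneg (gcb_dnn D μ w)) hz9
      · rw [if_neg]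
        rintro ⟨hA, hα⟩
        rw [gcb_extend_snoc_last] at hα
        refine hw ⟨hα, ?_⟩
        have := hA.2.2.1 (m+1) (Nat.succ_le_succ (Nat.zero_le _)) le_rfl
        rwa [gcb_extend_snoc_last] at this
  have hnn2 : 0 ≤ z9 D V μ m * wordNorm μ D :=
    mul_nonneg hz9 (gcb_wordNorm_nonneg μ D)
  unfold zt9
  refine Real.iSup_le (fun α => ?_) hnn2
  rw [gcb_sum_snoc, Finset.sum_comm]
  refine le_trans (Finset.sum_le_sum fun w (_ : w ∈ Finset.univ) => key α w) ?_
  rw [← Finset.sum_mul, mul_comm (z9 D V μ m) (wordNorm μ D)]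
  exact mul_le_mul_of_nonneg_right (gcb_sum_le_wordNorm D μ α) hz9

private lemma gcb_zt9_zero (D V : Word E → Op Λ) (μ : ℝ) :
    zt9 D V μ 0 0 ≤ wordNorm μ V := by
  unfold zt9
  refine Real.iSup_le (fun α => ?_) (gcb_wordNorm_nonneg μ V)
  rw [← Equiv.sum_comp (Equiv.funUnique (Fin 1) (Word E)).symm]
  refine le_trans (Finset.sum_le_sum fun w (_ : w ∈ Finset.univ) => ?_)
    (gcb_sum_le_wordNorm V μ α)
  have hw0 : extend ((Equiv.funUnique (Fin 1) (Word E)).symm w) 0 = w := by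
    unfold extend
    rw [dif_pos Nat.one_pos]
    rfl
  have hs : sprime (extend ((Equiv.funUnique (Fin 1) (Word E)).symm w)) 0 = w := by
    rw [show sprime (extend ((Equiv.funUnique (Fin 1) (Word E)).symm w)) 0
        = extend ((Equiv.funUnique (Fin 1) (Word E)).symm w) 0 from rfl, hw0]
  split_ifs with h h2 h2
  · unfold zw9
    rw [Finset.prod_range_zero, mul_one, hs, hw0]
    exact gcb_div_cancel_le (gcb_dnn V μ w) le_rfl (Nat.cast_nonneg _)
  · exfalso
    have hα := h.2
    rw [hw0] at hα
    exact h2 hα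
  · exact gcb_dnn V μ w
  · exact le_rfl

private lemma gcb_zt9_pow (D V : Word E → Op Λ) {μ : ℝ} (hμ : 0 < μ) (j : ℕ) :
    ∀ k, j ≤ k → zt9 D V μ k j ≤ zt9 D V μ j j * wordNorm μ D ^ (k - j) := by
  intro k hk
  induction k, hk using Nat.le_induction with
  | base => simp
  | succ n hn ih =>
      calc zt9 D V μ (n+1) j ≤ zt9 D V μ n j * wordNorm μ D :=
            gcb_zt9_step D V hμ hn
        _ ≤ (zt9 D V μ j j * wordNorm μ D ^ (n - j)) * wordNorm μ D :=
            mul_le_mul_of_nonneg_right ih (gcb_wordNorm_nonneg μ D)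
        _ = zt9 D V μ j j * wordNorm μ D ^ (n + 1 - j) := by
            rw [Nat.succ_sub hn, pow_succ, mul_assoc]

/-- **Combinatorial lemma for the locality of the generator `A`.**
For admissible sequences built from the collections `D` (non-frustration-free words) and `V⁺`
(purely raising words), and `μ > 1`: for `0 < j ≤ k` one has
`z_{k,j} ≤ z(j−1)·‖D‖_μ^(k−j+1)`, and `z_{k,0} ≤ ‖D‖_μ^k ‖V⁺‖_μ`. -/
theorem generator_combinatorial_bound (K : Checks Λ E)
    (D V : Word E → Op Λ) (hDcoll : IsColl K D) (hVcoll : IsColl K V)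
    (hD : ∀ w : Word E, D w ≠ 0 → (w.e ∪ w.m).Nonempty ∧ (w.e ∪ w.p).Nonempty)
    (hV : ∀ w : Word E, V w ≠ 0 → w.e = ∅ ∧ w.m = ∅ ∧ w.p.Nonempty)
    (μ : ℝ) (hμ : 1 < μ) :
    (∀ k j : ℕ, 0 < j → j ≤ k →
        z9kj D V μ k j ≤ z9 D V μ (j - 1) * wordNorm μ D ^ (k - j + 1)) ∧
      (∀ k : ℕ, z9kj D V μ k 0 ≤ wordNorm μ D ^ k * wordNorm μ V) := by
  have hμ0 : 0 < μ := lt_trans zero_lt_one hμ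
  constructor
  · intro k j hj0 hjk
    obtain ⟨m, rfl⟩ : ∃ m, j = m + 1 := ⟨j - 1, (Nat.succ_pred_eq_of_pos hj0).symm⟩
    calc z9kj D V μ k (m+1) ≤ zt9 D V μ k (m+1) := gcb_z9kj_le_zt9 D V μ k (m+1)
      _ ≤ zt9 D V μ (m+1) (m+1) * wordNorm μ D ^ (k - (m+1)) :=
          gcb_zt9_pow D V hμ0 (m+1) k hjk
      _ ≤ z9 D V μ m * wordNorm μ D * wordNorm μ D ^ (k - (m+1)) :=
          mul_le_mul_of_nonneg_right (gcb_zt9_last D V hμ0 m)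
            (pow_nonneg (gcb_wordNorm_nonneg μ D) (k - (m+1)))
      _ = z9 D V μ (m+1-1) * wordNorm μ D ^ (k - (m+1) + 1) := by
          rw [show m + 1 - 1 = m from rfl, pow_succ]; ring
  · intro k
    calc z9kj D V μ k 0 ≤ zt9 D V μ k 0 := gcb_z9kj_le_zt9 D V μ k 0
      _ ≤ zt9 D V μ 0 0 * wordNorm μ D ^ (k - 0) := gcb_zt9_pow D V hμ0 0 k (Nat.zero_le k)
      _ ≤ wordNorm μ V * wordNorm μ D ^ (k - 0) :=
          mul_le_mul_of_nonneg_right (gcb_zt9_zero D V μ)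
            (pow_nonneg (gcb_wordNorm_nonneg μ D) (k - 0))
      _ = wordNorm μ D ^ k * wordNorm μ V := by rw [Nat.sub_zero]; ring
end Stmt9
end QLDPC
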